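/- Let P be any probability distribution on ℝ with finite variance, with quantile function F⁻¹ (the generalized inverse of the distribution function of P), and define the deviance Dev(P) = ∫₀¹ (F⁻¹(1−q) − F⁻¹(q))² dq. Then 2·Var_{X~P}(X) ≤ Dev(P) ≤ 4·Var_{X~P}(X). Moreover, if P is symmetric around its mean, then Dev(P) = 4·Var_{X~P}(X). -/

import Mathlib

open MeasureTheory Set Filter Topology ProbabilityTheory

noncomputable section

/-- The quantile function (generalized inverse distribution function) of a probability
measure `P` on `ℝ`: `F⁻¹(q) = inf {x : F(x) ≥ q}` where `F(x) = P(-∞, x]`. -/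
def quantileFn (P : Measure ℝ) (q : ℝ) : ℝ :=
  sInf {x : ℝ | q ≤ (P (Set.Iic x)).toReal}

/-- The deviance of a distribution `P` on `ℝ`:
`Dev(P) = ∫₀¹ (F⁻¹(1−q) − F⁻¹(q))² dq`. -/
def deviance (P : Measure ℝ) : ℝ :=
  ∫ q in Set.Ioo (0 : ℝ) 1, (quantileFn P (1 - q) - quantileFn P q) ^ 2

/-- The variance of a distribution `P` on `ℝ`. -/
def distVar (P : Measure ℝ) : ℝ :=
  ∫ x, (x - ∫ y, y ∂P) ^ 2 ∂P

set_option linter.unusedSectionVars false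

lemma sInf_const_sub_mem {c : ℝ} {T : Set ℝ} (hne : T.Nonempty) (hbdd : BddAbove T) :
    sInf {x : ℝ | c - x ∈ T} = c - sSup T := by
  obtain ⟨y, hy⟩ := hne
  have hne' : {x : ℝ | c - x ∈ T}.Nonempty := ⟨c - y, by simpa [sub_sub_cancel] using hy⟩
  refine IsGLB.csInf_eq ⟨fun x hx => ?_, fun b hb => ?_⟩ hne'
  · have := le_csSup hbdd hx
    linarith
  · have hub : sSup T ≤ c - b := by
      refine csSup_le ⟨y, hy⟩ (fun z hz => ?_)
      have := hb (show c - z ∈ {x : ℝ | c - x ∈ T} from by simpa [sub_sub_cancel] using hz)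
      linarith
    linarith

section Aux

variable {P : Measure ℝ} [IsProbabilityMeasure P]

lemma quantileFn_eq_cdf (q : ℝ) : quantileFn P q = sInf {x : ℝ | q ≤ cdf P x} := by
  simp only [quantileFn, cdf_eq_real, measureReal_def]

lemma exists_cdf_lt {q : ℝ} (hq : 0 < q) : ∃ x : ℝ, cdf P x < q :=
  ((tendsto_cdf_atBot P).eventually (eventually_lt_nhds hq)).exists

lemma exists_lt_cdf {q : ℝ} (hq : q < 1) : ∃ x : ℝ, q < cdf P x :=
  ((tendsto_cdf_atTop P).eventually (eventually_gt_nhds hq)).exists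

lemma Sq_nonempty {q : ℝ} (hq : q < 1) : {x : ℝ | q ≤ cdf P x}.Nonempty := by
  obtain ⟨x, hx⟩ := exists_lt_cdf (P := P) hq
  exact ⟨x, hx.le⟩

lemma Sq_bddBelow {q : ℝ} (hq : 0 < q) : BddBelow {x : ℝ | q ≤ cdf P x} := by
  obtain ⟨x, hx⟩ := exists_cdf_lt (P := P) hq
  refine ⟨x, fun y hy => ?_⟩
  by_contra hxy
  exact absurd ((monotone_cdf P) (le_of_not_ge hxy)) (by simp only [mem_setOf_eq] at hy; intro h; linarith)

-- toReal monotone for measures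
lemma toReal_measure_mono {s t : Set ℝ} (h : s ⊆ t) : (P s).toReal ≤ (P t).toReal :=
  ENNReal.toReal_mono (measure_ne_top P t) (measure_mono h)

lemma Tq_nonempty {q : ℝ} (hq : 0 < q) : {y : ℝ | (P (Iio y)).toReal ≤ q}.Nonempty := by
  obtain ⟨x, hx⟩ := exists_cdf_lt (P := P) hq
  refine ⟨x, le_of_lt (lt_of_le_of_lt ?_ hx)⟩
  rw [cdf_eq_real, measureReal_def]
  exact toReal_measure_mono Iio_subset_Iic_self

lemma Tq_bddAbove {q : ℝ} (hq : q < 1) : BddAbove {y : ℝ | (P (Iio y)).toReal ≤ q} := by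
  obtain ⟨x, hx⟩ := exists_lt_cdf (P := P) hq
  refine ⟨x + 1, fun y hy => ?_⟩
  by_contra hxy
  push_neg at hxy
  have hsub : Iic x ⊆ Iio y := fun z hz => by
    simp only [mem_Iic] at hz; simp only [mem_Iio]; linarith
  have : cdf P x ≤ (P (Iio y)).toReal := by
    rw [cdf_eq_real, measureReal_def]; exact toReal_measure_mono hsub
  simp only [mem_setOf_eq] at hy
  linarith

/-- quantileFn q ≤ sSup T_q -/
lemma quantileFn_le_sSup {q : ℝ} (hq : 0 < q) (hq1 : q < 1) :
    quantileFn P q ≤ sSup {y : ℝ | (P (Iio y)).toReal ≤ q} := by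
  set R := sSup {y : ℝ | (P (Iio y)).toReal ≤ q} with hR
  by_contra hlt
  push_neg at hlt
  set y := (R + quantileFn P q) / 2 with hy
  have hy1 : R < y := by rw [hy]; linarith
  have hy2 : y < quantileFn P q := by rw [hy]; linarith
  -- y < quantileFn q means cdf P y < q
  have hcdf : cdf P y < q := by
    by_contra hc
    push_neg at hc
    have : quantileFn P q ≤ y := by
      rw [quantileFn_eq_cdf]
      exact csInf_le (Sq_bddBelow hq) hc
    linarith
  have hmem : y ∈ {y : ℝ | (P (Iio y)).toReal ≤ q} := by
    refine le_of_lt (lt_of_le_of_lt ?_ hcdf)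
    rw [cdf_eq_real, measureReal_def]
    exact toReal_measure_mono Iio_subset_Iic_self
  have := le_csSup (Tq_bddAbove hq1) hmem
  linarith

lemma toReal_Ici (t : ℝ) : (P (Ici t)).toReal = 1 - (P (Iio t)).toReal := by
  have h1 : P (Ici t) = P univ - P (Iio t) := by
    rw [← compl_Iio]
    exact measure_compl measurableSet_Iio (measure_ne_top P _)
  rw [h1, measure_univ, ENNReal.toReal_sub_of_le (prob_le_one) ENNReal.one_ne_top,
    ENNReal.toReal_one]

lemma quantileFn_one_sub {c q : ℝ} (hsym : P.map (fun x => c - x) = P) (hq : 0 < q) (hq1 : q < 1) :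
    quantileFn P (1 - q) = c - sSup {y : ℝ | (P (Iio y)).toReal ≤ q} := by
  have hmeas : Measurable (fun x : ℝ => c - x) := measurable_const.sub measurable_id
  have hcdf : ∀ x : ℝ, (P (Iic x)).toReal = 1 - (P (Iio (c - x))).toReal := by
    intro x
    conv_lhs => rw [← hsym]
    rw [Measure.map_apply hmeas measurableSet_Iic]
    have : (fun x : ℝ => c - x) ⁻¹' Iic x = Ici (c - x) := by
      ext y
      simp only [mem_preimage, mem_Iic, mem_Ici]
      constructor <;> intro <;> linarith
    rw [this, toReal_Ici]
  have hset : {x : ℝ | 1 - q ≤ (P (Iic x)).toReal} = {x : ℝ | c - x ∈ {y : ℝ | (P (Iio y)).toReal ≤ q}} := by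
    ext x
    simp only [mem_setOf_eq, hcdf x]
    constructor <;> intro <;> linarith
  rw [quantileFn, hset, sInf_const_sub_mem (Tq_nonempty hq) (Tq_bddAbove hq1)]

/-- the bad set is contained in a countable set -/
lemma quantileFn_eq_sSup_ae {q : ℝ} (hq : 0 < q) (hq1 : q < 1)
    (hnr : q ∉ range (fun r : ℚ => cdf P (r : ℝ))) :
    quantileFn P q = sSup {y : ℝ | (P (Iio y)).toReal ≤ q} := by
  refine le_antisymm (quantileFn_le_sSup hq hq1) ?_
  by_contra hlt
  push_neg at hlt
  obtain ⟨r, hr1, hr2⟩ := exists_rat_btwn hlt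
  refine hnr ⟨r, ?_⟩
  have hle : cdf P r ≤ q := by
    obtain ⟨y, hy, hry⟩ := exists_lt_of_lt_csSup (Tq_nonempty hq) hr2
    refine le_trans ?_ hy
    rw [cdf_eq_real, measureReal_def]
    exact toReal_measure_mono (fun z hz => lt_of_le_of_lt hz hry)
  have hge : q ≤ cdf P r := by
    rw [quantileFn_eq_cdf] at hr1
    obtain ⟨z, hz, hzr⟩ := exists_lt_of_csInf_lt (Sq_nonempty hq1) hr1
    exact hz.trans ((monotone_cdf P) hzr.le)
  exact le_antisymm hle hge

lemma quantileFn_symm_ae {c : ℝ} (hsym : P.map (fun x => c - x) = P) :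
    ∀ᵐ q ∂(volume.restrict (Ioo (0:ℝ) 1)), quantileFn P (1 - q) = c - quantileFn P q := by
  have hcnt : (volume : Measure ℝ) (range (fun r : ℚ => cdf P (r : ℝ))) = 0 :=
    Set.Countable.measure_zero (countable_range _) _
  have hcnt' : (volume.restrict (Ioo (0:ℝ) 1)) (range (fun r : ℚ => cdf P (r : ℝ))) = 0 :=
    le_antisymm (le_trans (Measure.restrict_le_self _) hcnt.le) zero_le
  filter_upwards [ae_restrict_mem measurableSet_Ioo, measure_eq_zero_iff_ae_notMem.1 hcnt'] with q hq hnr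
  rw [quantileFn_one_sub hsym hq.1 hq.2, quantileFn_eq_sSup_ae hq.1 hq.2 hnr]

lemma quantileFn_le_iff {q x : ℝ} (hq : 0 < q) (hq1 : q < 1) :
    quantileFn P q ≤ x ↔ q ≤ cdf P x := by
  rw [quantileFn_eq_cdf]
  constructor
  · intro hle
    have key : ∀ y, x < y → q ≤ cdf P y := fun y hy => by
      obtain ⟨z, hz, hzy⟩ := exists_lt_of_csInf_lt (Sq_nonempty hq1) (lt_of_le_of_lt hle hy)
      exact hz.trans ((monotone_cdf P) hzy.le)
    have h1 : Tendsto (cdf P) (𝓝[>] x) (𝓝 (cdf P x)) :=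
      ((cdf P).right_continuous x).tendsto.mono_left (nhdsWithin_mono x Ioi_subset_Ici_self)
    exact ge_of_tendsto h1 (eventually_nhdsWithin_of_forall (fun y hy => key y hy))
  · intro hcdf
    exact csInf_le (Sq_bddBelow hq) hcdf

lemma quantileFn_monotoneOn : MonotoneOn (quantileFn P) (Ioo (0:ℝ) 1) := by
  intro q hq q' hq' hle
  rw [quantileFn_eq_cdf, quantileFn_eq_cdf]
  exact csInf_le_csInf (Sq_bddBelow hq.1) (Sq_nonempty hq'.2) (fun x hx => le_trans hle hx)

lemma aemeasurable_quantileFn : AEMeasurable (quantileFn P) (volume.restrict (Ioo (0:ℝ) 1)) :=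
  aemeasurable_restrict_of_monotoneOn measurableSet_Ioo quantileFn_monotoneOn

lemma map_quantileFn : (volume.restrict (Ioo (0:ℝ) 1)).map (quantileFn P) = P := by
  have hprob : IsProbabilityMeasure ((volume.restrict (Ioo (0:ℝ) 1)).map (quantileFn P)) := by
    constructor
    rw [Measure.map_apply_of_aemeasurable aemeasurable_quantileFn MeasurableSet.univ]
    simp
  refine Measure.ext_of_Iic _ _ (fun x => ?_)
  rw [Measure.map_apply_of_aemeasurable aemeasurable_quantileFn measurableSet_Iic,
    Measure.restrict_apply' measurableSet_Ioo]
  have hset : quantileFn P ⁻¹' Iic x ∩ Ioo 0 1 = Iic (cdf P x) ∩ Ioo 0 1 := by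
    ext q
    simp only [mem_inter_iff, mem_preimage, mem_Iic, mem_Ioo, and_congr_left_iff]
    intro hq
    rw [quantileFn_le_iff hq.1 hq.2]
  rw [hset, ← ofReal_cdf P x]
  rcases lt_or_ge (cdf P x) 1 with h1 | h1
  · have : Iic (cdf P x) ∩ Ioo (0:ℝ) 1 = Ioc 0 (cdf P x) := by
      ext q
      simp only [mem_inter_iff, mem_Iic, mem_Ioo, mem_Ioc]
      constructor
      · rintro ⟨h, h0, _⟩; exact ⟨h0, h⟩
      · rintro ⟨h0, h⟩; exact ⟨h, h0, lt_of_le_of_lt h h1⟩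
    rw [this, Real.volume_Ioc, sub_zero]
  · have h1' : cdf P x = 1 := le_antisymm (cdf_le_one P x) h1
    have : Iic (cdf P x) ∩ Ioo (0:ℝ) 1 = Ioo 0 1 := by
      rw [h1']
      exact inter_eq_self_of_subset_right (fun q hq => le_of_lt hq.2)
    rw [this, Real.volume_Ioo, h1']
    norm_num


end Aux

set_option maxHeartbeats 2000000 in
theorem deviance_variance (P : Measure ℝ) [IsProbabilityMeasure P]
    (hvar : Integrable (fun x => x ^ 2) P) :
    (2 * distVar P ≤ deviance P ∧ deviance P ≤ 4 * distVar P) ∧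
      (P.map (fun x => 2 * (∫ y, y ∂P) - x) = P → deviance P = 4 * distVar P) := by
  set ν : Measure ℝ := volume.restrict (Ioo (0:ℝ) 1) with hν
  set μ0 : ℝ := ∫ y, y ∂P with hμ0
  set h : ℝ → ℝ := quantileFn P with hh
  haveI hνprob : IsProbabilityMeasure ν := by
    constructor
    rw [hν, Measure.restrict_apply_univ]
    simp [Real.volume_Ioo]
  have hm : AEMeasurable h ν := aemeasurable_quantileFn
  have hmap : ν.map h = P := map_quantileFn
  have hmono := quantileFn_monotoneOn (P := P)
  -- reflection
  have hσ : MeasurePreserving (fun q : ℝ => 1 - q) ν ν := by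
    have h0 : MeasurePreserving (fun q : ℝ => 1 - q) volume volume :=
      Measure.measurePreserving_sub_left volume 1
    have hpre : (fun q : ℝ => 1 - q) ⁻¹' (Ioo (0:ℝ) 1) = Ioo (0:ℝ) 1 := by
      ext q
      simp only [mem_preimage, mem_Ioo]
      constructor <;> rintro ⟨a, b⟩ <;> constructor <;> linarith
    have := h0.restrict_preimage measurableSet_Ioo (s := Ioo (0:ℝ) 1)
    rwa [hpre] at this
  have hemb : MeasurableEmbedding (fun q : ℝ => 1 - q) :=
    (MeasurableEquiv.subLeft (1:ℝ)).measurableEmbedding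
  have hrefl : ∀ φ : ℝ → ℝ, ∫ q, φ (1 - q) ∂ν = ∫ q, φ q ∂ν := fun φ =>
    hσ.integral_comp hemb φ
  have hreflInt : ∀ φ : ℝ → ℝ, Integrable φ ν → Integrable (fun q => φ (1 - q)) ν := by
    intro φ hφ
    have ham : AEStronglyMeasurable φ (ν.map (fun q : ℝ => 1 - q)) := by
      rw [hσ.map_eq]; exact hφ.aestronglyMeasurable
    have h1 : Integrable φ (ν.map (fun q : ℝ => 1 - q)) := by rw [hσ.map_eq]; exact hφ
    simpa [Function.comp_def] using (integrable_map_measure ham hσ.measurable.aemeasurable).1 h1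
  -- integrability wrt P
  have hP1 : Integrable (fun x : ℝ => x) P := by
    have hbd : Integrable (fun x : ℝ => x ^ 2 + 1) P := hvar.add (integrable_const 1)
    refine hbd.mono' measurable_id.aestronglyMeasurable (ae_of_all _ fun x => ?_)
    simp only [Real.norm_eq_abs]
    nlinarith [sq_nonneg (|x| - 1), sq_abs x, abs_nonneg x]
  have hPc : Integrable (fun x => (x - μ0) ^ 2) P := by
    have hfun : (fun x : ℝ => (x - μ0) ^ 2) = fun x => x ^ 2 - 2 * μ0 * x + μ0 ^ 2 :=
      funext fun x => by ring
    rw [hfun]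
    exact (hvar.sub (hP1.const_mul (2 * μ0))).add (integrable_const _)
  -- change of variables
  have hIeq : ∀ f : ℝ → ℝ, Measurable f → ∫ x, f x ∂P = ∫ q, f (h q) ∂ν := by
    intro f hf
    rw [← hmap, integral_map hm hf.aestronglyMeasurable]
  have hIint : ∀ f : ℝ → ℝ, Measurable f → Integrable f P → Integrable (fun q => f (h q)) ν := by
    intro f hf hfi
    rw [← hmap] at hfi
    have := (integrable_map_measure hf.aestronglyMeasurable hm).1 hfi
    simpa [Function.comp_def] using this
  have mfc : Measurable (fun x : ℝ => (x - μ0) ^ 2) :=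
    (measurable_id.sub measurable_const).pow_const 2
  have mfs : Measurable (fun x : ℝ => x - μ0) := measurable_id.sub measurable_const
  have hg2 : Integrable (fun q => (h q - μ0) ^ 2) ν := hIint (fun x => (x - μ0) ^ 2) mfc hPc
  have hg : Integrable (fun q => h q - μ0) ν := hIint (fun x => x - μ0) mfs (hP1.sub (integrable_const μ0))
  have hVdef : distVar P = ∫ x, (x - μ0) ^ 2 ∂P := by rw [hμ0]; rfl
  have hVg : ∫ q, (h q - μ0) ^ 2 ∂ν = distVar P := by rw [hVdef, hIeq (fun x => (x - μ0) ^ 2) mfc]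
  have hgmean : ∫ q, (h q - μ0) ∂ν = 0 := by
    rw [← hIeq (fun x => x - μ0) mfs, integral_sub hP1 (integrable_const μ0), integral_const]
    simp [hμ0]
  -- reflected versions
  have hφ2 : Integrable (fun q => (h (1 - q) - μ0) ^ 2) ν := hreflInt (fun q => (h q - μ0) ^ 2) hg2
  have hφ1 : Integrable (fun q => h (1 - q) - μ0) ν := hreflInt (fun q => h q - μ0) hg
  have hVφ : ∫ q, (h (1 - q) - μ0) ^ 2 ∂ν = distVar P := (hrefl (fun q => (h q - μ0) ^ 2)).trans hVg
  have hφmean : ∫ q, (h (1 - q) - μ0) ∂ν = 0 := (hrefl (fun q => h q - μ0)).trans hgmean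
  have hφae : AEMeasurable (fun q => h (1 - q)) ν :=
    hm.comp_quasiMeasurePreserving hσ.quasiMeasurePreserving
  -- integrability of the product
  have hsum2 : Integrable (fun q => (h q - μ0) ^ 2 + (h (1 - q) - μ0) ^ 2) ν := hg2.add hφ2
  have hbd2 : Integrable (fun q => 1/2 * ((h q - μ0) ^ 2 + (h (1 - q) - μ0) ^ 2)) ν :=
    hsum2.const_mul (1/2)
  have hprod : Integrable (fun q => (h q - μ0) * (h (1 - q) - μ0)) ν := by
    refine Integrable.mono' hbd2
      (((hm.sub aemeasurable_const).mul (hφae.sub aemeasurable_const)).aestronglyMeasurable)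
      (ae_of_all _ fun q => ?_)
    rw [Real.norm_eq_abs, abs_mul]
    nlinarith [sq_nonneg (|h q - μ0| - |h (1 - q) - μ0|), sq_abs (h q - μ0),
      sq_abs (h (1 - q) - μ0), abs_nonneg (h q - μ0), abs_nonneg (h (1 - q) - μ0)]
  set C : ℝ := ∫ q, (h q - μ0) * (h (1 - q) - μ0) ∂ν with hC
  -- deviance expansion
  have hdev0 : deviance P = ∫ q, (h (1 - q) - h q) ^ 2 ∂ν := rfl
  have hdev : deviance P = distVar P + distVar P - 2 * C := by
    rw [hdev0]
    have hfun : ∀ q : ℝ, (h (1 - q) - h q) ^ 2 =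
        ((h (1 - q) - μ0) ^ 2 + (h q - μ0) ^ 2) - 2 * ((h q - μ0) * (h (1 - q) - μ0)) :=
      fun q => by ring
    have hsumφg : Integrable (fun q => (h (1 - q) - μ0) ^ 2 + (h q - μ0) ^ 2) ν := hφ2.add hg2
    rw [integral_congr_ae (ae_of_all _ hfun), integral_sub hsumφg (hprod.const_mul 2),
      integral_add hφ2 hg2, integral_const_mul, hVφ, hVg, hC]
  -- Chebyshev: C ≤ 0
  have hCle : C ≤ 0 := by
    set π : Measure (ℝ × ℝ) := ν.prod ν with hπ
    have t1 : Integrable (fun z : ℝ × ℝ => ((h z.1 - μ0) * (h (1 - z.1) - μ0)) * (1:ℝ)) π :=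
      hprod.mul_prod (integrable_const 1)
    have t2 : Integrable (fun z : ℝ × ℝ => (1:ℝ) * ((h z.2 - μ0) * (h (1 - z.2) - μ0))) π :=
      (integrable_const 1).mul_prod hprod
    have t3 : Integrable (fun z : ℝ × ℝ => (h z.1 - μ0) * (h (1 - z.2) - μ0)) π :=
      hg.mul_prod hφ1
    have t4 : Integrable (fun z : ℝ × ℝ => (h (1 - z.1) - μ0) * (h z.2 - μ0)) π :=
      hφ1.mul_prod hg
    have hexp : ∀ z : ℝ × ℝ,
        ((h z.1 - μ0) - (h z.2 - μ0)) * ((h (1 - z.1) - μ0) - (h (1 - z.2) - μ0)) =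
          ((h z.1 - μ0) * (h (1 - z.1) - μ0)) * (1:ℝ)
            + (1:ℝ) * ((h z.2 - μ0) * (h (1 - z.2) - μ0))
            - (h z.1 - μ0) * (h (1 - z.2) - μ0)
            - (h (1 - z.1) - μ0) * (h z.2 - μ0) := fun z => by ring
    have he_nonpos : ∀ᵐ z ∂π,
        ((h z.1 - μ0) - (h z.2 - μ0)) * ((h (1 - z.1) - μ0) - (h (1 - z.2) - μ0)) ≤ 0 := by
      have hres : π = (volume.prod volume).restrict ((Ioo (0:ℝ) 1) ×ˢ (Ioo (0:ℝ) 1)) := by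
        rw [hπ, hν, Measure.prod_restrict]
      rw [hres]
      filter_upwards [ae_restrict_mem (measurableSet_Ioo.prod measurableSet_Ioo)] with z hz
      obtain ⟨hz1, hz2⟩ := hz
      have hz1' : (1:ℝ) - z.2 ∈ Ioo (0:ℝ) 1 := by
        simp only [mem_Ioo] at hz2 ⊢; constructor <;> linarith [hz2.1, hz2.2]
      have hz2' : (1:ℝ) - z.1 ∈ Ioo (0:ℝ) 1 := by
        simp only [mem_Ioo] at hz1 ⊢; constructor <;> linarith [hz1.1, hz1.2]
      rcases le_total z.1 z.2 with hle | hle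
      · have m1 : h z.1 ≤ h z.2 := hmono hz1 hz2 hle
        have m2 : h (1 - z.2) ≤ h (1 - z.1) := hmono hz1' hz2' (by linarith)
        nlinarith [m1, m2]
      · have m1 : h z.2 ≤ h z.1 := hmono hz2 hz1 hle
        have m2 : h (1 - z.1) ≤ h (1 - z.2) := hmono hz2' hz1' (by linarith)
        nlinarith [m1, m2]
    have hsum : ∫ z, (((h z.1 - μ0) - (h z.2 - μ0)) *
        ((h (1 - z.1) - μ0) - (h (1 - z.2) - μ0))) ∂π = 2 * C := by
      rw [integral_congr_ae (ae_of_all _ hexp)]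
      have t12 : Integrable (fun z : ℝ × ℝ => ((h z.1 - μ0) * (h (1 - z.1) - μ0)) * (1:ℝ)
          + (1:ℝ) * ((h z.2 - μ0) * (h (1 - z.2) - μ0))) π := t1.add t2
      have t123 : Integrable (fun z : ℝ × ℝ => (((h z.1 - μ0) * (h (1 - z.1) - μ0)) * (1:ℝ)
          + (1:ℝ) * ((h z.2 - μ0) * (h (1 - z.2) - μ0)))
          - (h z.1 - μ0) * (h (1 - z.2) - μ0)) π := t12.sub t3
      rw [integral_sub t123 t4, integral_sub t12 t3, integral_add t1 t2]
      rw [integral_prod_mul (fun p => (h p - μ0) * (h (1 - p) - μ0)) (fun _ => (1:ℝ)),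
        integral_prod_mul (fun _ => (1:ℝ)) (fun q => (h q - μ0) * (h (1 - q) - μ0)),
        integral_prod_mul (fun p => (h p - μ0)) (fun q => (h (1 - q) - μ0)),
        integral_prod_mul (fun p => (h (1 - p) - μ0)) (fun q => (h q - μ0))]
      rw [hgmean, hφmean]
      simp [← hC]
      ring
    have := integral_nonpos_of_ae he_nonpos
    rw [hsum] at this
    linarith
  -- C ≥ -V
  have hCge : -distVar P ≤ C := by
    have hb : ∀ q : ℝ, -(1/2 * ((h q - μ0) ^ 2 + (h (1 - q) - μ0) ^ 2)) ≤
        (h q - μ0) * (h (1 - q) - μ0) :=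
      fun q => by nlinarith [sq_nonneg ((h q - μ0) + (h (1 - q) - μ0))]
    have hnegbd : Integrable (fun q => -(1/2 * ((h q - μ0) ^ 2 + (h (1 - q) - μ0) ^ 2))) ν :=
      hbd2.neg
    have hmono2 := integral_mono hnegbd hprod hb
    rw [integral_neg, integral_const_mul, integral_add hg2 hφ2, hVg, hVφ] at hmono2
    rw [hC]
    linarith
  refine ⟨⟨by rw [hdev]; linarith, by rw [hdev]; linarith⟩, fun hs => ?_⟩
  -- symmetry case
  have hae := quantileFn_symm_ae (P := P) (c := 2 * μ0) (by rw [hμ0]; exact hs)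
  have hCeq : C = -distVar P := by
    have hae' : (fun q => (h q - μ0) * (h (1 - q) - μ0)) =ᵐ[ν] (fun q => -((h q - μ0) ^ 2)) := by
      refine hae.mono (fun q hq => ?_)
      simp only [hh]
      rw [hq]
      ring
    rw [hC, integral_congr_ae hae', integral_neg, hVg]
  rw [hdev, hCeq]
  ring

end
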